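/- Assume that λ is an infinite cardinal with λ^ℵ₀ = λ. Then there exists a Hausdorff topological space X such that: (1) the cardinality of X is λ; (2) X is locally countable (every point has a countable open neighborhood); (3) X is scattered; (4) the set of isolated points of X has cardinality λ; and (5) X is sequentially compact. -/

import Mathlib

open Cardinal Topology


open Cardinal Set Filter

noncomputable section AD

structure ADSystem (X : Type) : Type 1 where
  C : X → Set X
  rho : X → Ordinal.{0}
  C_countable : ∀ x, (C x).Countable
  C_infinite_or_empty : ∀ x, (C x).Infinite ∨ C x = ∅
  rho_lt : ∀ x, ∀ c ∈ C x, rho c < rho x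
  almost_disjoint : ∀ x y, x ≠ y → (C x ∩ C y).Finite
  dense' : ∀ B : Set X, B.Countable → B.Infinite → ∃ p, (B ∩ C p).Infinite

variable {X : Type} (S : ADSystem X)

def ADSystem.topo : TopologicalSpace X where
  IsOpen U := ∀ z ∈ U, (S.C z \ U).Finite
  isOpen_univ := fun z _ => by simp
  isOpen_inter := fun U V hU hV z hz => by
    rw [Set.diff_inter]; exact (hU z hz.1).union (hV z hz.2)
  isOpen_sUnion := fun 𝒮 h z hz => by
    obtain ⟨U, hU𝒮, hzU⟩ := hz
    exact (h U hU𝒮 z hzU).subset (Set.diff_subset_diff_right (subset_sUnion_of_mem hU𝒮))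

lemma ADSystem.isOpen_iff (U : Set X) :
    @IsOpen X S.topo U ↔ ∀ z ∈ U, (S.C z \ U).Finite := Iff.rfl

/-- the well-founded relation -/
lemma ADSystem.wf : WellFounded (InvImage (· < ·) S.rho) :=
  InvImage.wf _ (IsWellFounded.wf)

/-- hereditary closure -/
def ADSystem.Tset (x : X) : Set X := ⋂₀ {A | x ∈ A ∧ ∀ z ∈ A, S.C z ⊆ A}

lemma ADSystem.mem_Tset (x : X) : x ∈ S.Tset x :=
  Set.mem_sInter.2 fun _ hA => hA.1

lemma ADSystem.Tset_hered {x z : X} (hz : z ∈ S.Tset x) : S.C z ⊆ S.Tset x := by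
  intro c hc
  exact Set.mem_sInter.2 fun A hA => hA.2 z (Set.mem_sInter.1 hz A hA) hc

lemma ADSystem.Tset_min {x : X} {A : Set X} (h1 : x ∈ A) (h2 : ∀ z ∈ A, S.C z ⊆ A) :
    S.Tset x ⊆ A := Set.sInter_subset_of_mem ⟨h1, h2⟩

lemma ADSystem.Tset_open (x : X) : @IsOpen X S.topo (S.Tset x) := by
  rw [S.isOpen_iff]
  intro z hz
  rw [Set.diff_eq_empty.2 (S.Tset_hered hz)]
  exact Set.finite_empty

lemma ADSystem.Tset_countable (x : X) : (S.Tset x).Countable := by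
  induction x using S.wf.induction with
  | _ x IH =>
    have hsub : S.Tset x ⊆ insert x (⋃ c ∈ S.C x, S.Tset c) := by
      refine S.Tset_min (Set.mem_insert _ _) ?_
      rintro z (rfl | hz)
      · intro c hc
        exact Set.mem_insert_iff.2 (Or.inr (Set.mem_biUnion hc (S.mem_Tset c)))
      · simp only [Set.mem_iUnion] at hz
        obtain ⟨c, hc, hzc⟩ := hz
        intro d hd
        exact Set.mem_insert_iff.2 (Or.inr (Set.mem_biUnion hc (S.Tset_hered hzc hd)))
    refine Set.Countable.mono hsub ?_
    exact Set.Countable.insert _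
      ((S.C_countable x).biUnion fun c hc => IH c (S.rho_lt x c hc))

lemma ADSystem.locally_countable (x : X) :
    ∃ U : Set X, @IsOpen X S.topo U ∧ x ∈ U ∧ U.Countable :=
  ⟨S.Tset x, S.Tset_open x, S.mem_Tset x, S.Tset_countable x⟩

lemma ADSystem.scattered (A : Set X) (hA : A.Nonempty) :
    ∃ a ∈ A, ∃ U : Set X, @IsOpen X S.topo U ∧ U ∩ A = {a} := by
  obtain ⟨a, haA, hmin⟩ := (S.wf).has_min A hA
  refine ⟨a, haA, S.Tset a, S.Tset_open a, ?_⟩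
  have hsub : S.Tset a ⊆ {z | S.rho z < S.rho a ∨ z = a} := by
    refine S.Tset_min (Or.inr rfl) ?_
    rintro z (hz | rfl) c hc
    · exact Or.inl ((S.rho_lt z c hc).trans hz)
    · exact Or.inl (S.rho_lt z c hc)
  apply Set.eq_singleton_iff_unique_mem.2
  refine ⟨⟨S.mem_Tset a, haA⟩, ?_⟩
  rintro z ⟨hzT, hzA⟩
  rcases hsub hzT with h | h
  · exact absurd h (hmin z hzA)
  · exact h

lemma ADSystem.isolated_iff (x : X) :
    @IsOpen X S.topo ({x} : Set X) ↔ S.C x = ∅ := by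
  rw [S.isOpen_iff]
  constructor
  · intro h
    rcases S.C_infinite_or_empty x with hi | he
    · exact absurd (h x rfl) (hi.diff (Set.finite_singleton x))
    · exact he
  · rintro he z rfl
    rw [he]
    exact Set.finite_empty.subset (Set.diff_subset)

lemma ADSystem.seq_compact : @IsSeqCompact X S.topo Set.univ := by
  letI := S.topo
  intro u _
  by_cases hA : ∃ a, {n | u n = a}.Infinite
  · obtain ⟨a, ha⟩ := hA
    refine ⟨a, Set.mem_univ a, Nat.nth (fun n => u n = a), Nat.nth_strictMono ha, ?_⟩
    have : (u ∘ Nat.nth (fun n => u n = a)) = fun _ => a := by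
      funext k
      exact Nat.nth_mem_of_infinite ha k
    rw [this]
    exact tendsto_const_nhds
  · push_neg at hA
    have hrange : (Set.range u).Infinite := by
      intro hfin
      have : (Set.univ : Set ℕ).Finite := by
        refine Set.Finite.subset (hfin.biUnion (fun a _ => hA a)) ?_
        intro n _
        exact Set.mem_biUnion (Set.mem_range_self n) rfl
      exact Set.infinite_univ this
    obtain ⟨p, hp⟩ := S.dense' (Set.range u) (Set.countable_range u) hrange
    set I : ℕ → Prop := fun n => u n ∈ S.C p with hI
    have hIinf : (setOf I).Infinite := by
      intro hfin
      have himg : (Set.range u ∩ S.C p) ⊆ u '' (setOf I) := by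
        rintro v ⟨⟨n, rfl⟩, hv⟩
        exact ⟨n, hv, rfl⟩
      exact hp (Set.Finite.subset (hfin.image u) himg)
    refine ⟨p, Set.mem_univ p, Nat.nth I, Nat.nth_strictMono hIinf, ?_⟩
    rw [Filter.tendsto_def]
    intro V hV
    rw [@mem_nhds_iff X S.topo p V] at hV
    obtain ⟨U, hUV, hUopen, hpU⟩ := hV
    have hbad : (S.C p \ U).Finite := (S.isOpen_iff U).1 hUopen p hpU
    have hK : (⋃ v ∈ S.C p \ U, {n | u n = v}).Finite :=
      hbad.biUnion fun v _ => hA v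
    obtain ⟨N, hN⟩ := hK.bddAbove
    refine Filter.mem_of_superset (Filter.mem_atTop (N + 1)) ?_
    intro k hk
    have hφ : N + 1 ≤ Nat.nth I k := le_trans hk ((Nat.nth_strictMono hIinf).le_apply)
    have hmem : u (Nat.nth I k) ∈ S.C p := Nat.nth_mem_of_infinite hIinf k
    have hnotbad : u (Nat.nth I k) ∉ S.C p \ U := by
      intro hbadmem
      have : Nat.nth I k ∈ ⋃ v ∈ S.C p \ U, {n | u n = v} :=
        Set.mem_biUnion hbadmem rfl
      have := hN this
      omega
    refine hUV ?_
    by_contra hnotU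
    exact hnotbad ⟨hmem, hnotU⟩

end AD

namespace ADT2

/-- address code: lists grow at the head; parent of `i :: q` is `q`. -/
def lcode : List ℕ → ℕ
  | [] => 0
  | i :: q => Nat.pair (lcode q) i + 1

lemma lcode_inj : Function.Injective lcode := by
  intro p q h
  induction p generalizing q with
  | nil => cases q with
    | nil => rfl
    | cons j q' => simp [lcode] at h
  | cons i p' IH =>
    cases q with
    | nil => simp [lcode] at h
    | cons j q' =>
      simp only [lcode, Nat.add_right_cancel_iff] at h
      obtain ⟨h1, h2⟩ := Nat.pair_eq_pair.1 h
      rw [IH h1, h2]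

lemma lcode_lt (i : ℕ) (q : List ℕ) : lcode q < lcode (i :: q) := by
  have := Nat.left_le_pair (lcode q) i
  simp only [lcode]; omega

def acode : Bool × List ℕ → ℕ := fun a => 2 * lcode a.2 + (cond a.1 1 0)

lemma acode_inj : Function.Injective acode := by
  rintro ⟨s, p⟩ ⟨t, q⟩ h
  simp only [acode] at h
  have hs : s = t := by
    rcases s with _|_ <;> rcases t with _|_ <;> simp at h ⊢ <;> omega
  subst hs
  have : lcode p = lcode q := by rcases s with _|_ <;> simp at h <;> omega
  rw [lcode_inj this]

lemma acode_lt (s : Bool) (i : ℕ) (q : List ℕ) : acode (s, q) < acode (s, i :: q) := by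
  have := lcode_lt i q
  simp only [acode]
  rcases s with _|_ <;> simp <;> omega

open Classical in
noncomputable def adecode (n : ℕ) : Option (Bool × List ℕ) :=
  if h : ∃ a, acode a = n then some h.choose else none

open Classical in
lemma adecode_acode (a : Bool × List ℕ) : adecode (acode a) = some a := by
  rw [adecode, dif_pos ⟨a, rfl⟩]
  congr 1
  exact acode_inj (Exists.choose_spec (⟨a, rfl⟩ : ∃ b, acode b = acode a))

open Classical in
lemma acode_adecode {n : ℕ} {a : Bool × List ℕ} (h : adecode n = some a) : acode a = n := by
  rw [adecode] at h
  split at h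
  · next hex =>
    rw [Option.some_inj] at h
    rw [← h]
    exact hex.choose_spec
  · exact absurd h (by simp)

end ADT2

namespace Sep

open ADT2 Classical

variable {X : Type}

noncomputable def enumOf {T : Set X} (h : T.Countable ∧ T.Infinite) : ℕ → X :=
  (Set.Countable.exists_eq_range h.1 h.2.nonempty).choose

lemma enumOf_spec {T : Set X} (h : T.Countable ∧ T.Infinite) : T = Set.range (enumOf h) :=
  (Set.Countable.exists_eq_range h.1 h.2.nonempty).choose_spec

lemma enumOf_mem {T : Set X} (h : T.Countable ∧ T.Infinite) (i : ℕ) : enumOf h i ∈ T := by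
  have h2 := Set.mem_range_self (f := enumOf h) i
  rw [← enumOf_spec h] at h2; exact h2

lemma enumOf_surj {T : Set X} (h : T.Countable ∧ T.Infinite) {w : X} (hw : w ∈ T) :
    ∃ i, enumOf h i = w := by
  have h2 := enumOf_spec h
  rw [h2] at hw; exact hw

end Sep

namespace Sep
open ADT2 Classical

variable {X : Type}

/-- `sideNe k s` : the address coded by `k` exists and has side different from `s`. -/
def sideNe (k : ℕ) (s : Bool) : Prop := ∃ b, adecode k = some b ∧ b.1 ≠ s

def optC (S : ADSystem X) : Option X → Set X
  | none => ∅
  | some z => insert z (S.C z)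

def root (x y : X) : Bool → X := fun b => cond b y x

/-- the "forbidden" set for growing the side-`s` tree, given the partial function `g`. -/
def BADg (S : ADSystem X) (x y : X) (g : ℕ → Option X) (m : ℕ) (s : Bool) : Set X :=
  {x} ∪ {y} ∪ ⋃ (k : Fin m), ⋃ (_ : sideNe k.1 s), optC S (g k.1)

noncomputable def childBody (S : ADSystem X) (x y : X) (g : ℕ → Option X)
    (s : Bool) (i : ℕ) (q : List ℕ) : Option X :=
  match g (acode (s, q)) with
  | none => none
  | some z =>
      if ht : (S.C z \ BADg S x y g (acode (s, q)) s).Countable ∧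
              (S.C z \ BADg S x y g (acode (s, q)) s).Infinite then
        some (enumOf ht i)
      else none

noncomputable def bodyF (S : ADSystem X) (x y : X) (n : ℕ)
    (rec : ∀ m, m < n → Option X) : Option X :=
  match adecode n with
  | some (s, []) => some (root x y s)
  | some (s, i :: q) =>
      if hm : acode (s, q) < n then
        childBody S x y (fun m => if hm' : m < n then rec m hm' else none) s i q
      else none
  | none => none

noncomputable def Afun (S : ADSystem X) (x y : X) : ℕ → Option X :=
  (Nat.lt_wfRel.wf).fix (bodyF S x y)

lemma Afun_eq (S : ADSystem X) (x y : X) (n : ℕ) :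
    Afun S x y n = bodyF S x y n (fun m _ => Afun S x y m) :=
  WellFounded.fix_eq _ _ _

lemma childBody_congr (S : ADSystem X) (x y : X) {g g' : ℕ → Option X}
    (s : Bool) (i : ℕ) (q : List ℕ)
    (hg : ∀ m, m ≤ acode (s, q) → g m = g' m) :
    childBody S x y g s i q = childBody S x y g' s i q := by
  have h1 : g (acode (s, q)) = g' (acode (s, q)) := hg _ le_rfl
  have hBAD : BADg S x y g (acode (s, q)) s = BADg S x y g' (acode (s, q)) s := by
    unfold BADg
    congr 1
    refine Set.iUnion_congr fun k => Set.iUnion_congr fun _ => ?_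
    rw [hg k.1 (le_of_lt k.2)]
  unfold childBody
  rw [h1, hBAD]

/-- fixed notation for the forbidden set relative to the full recursion. -/
noncomputable def BADat (S : ADSystem X) (x y : X) (m : ℕ) (s : Bool) : Set X :=
  BADg S x y (Afun S x y) m s

lemma A_root (S : ADSystem X) (x y : X) (s : Bool) :
    Afun S x y (acode (s, [])) = some (root x y s) := by
  rw [Afun_eq]
  unfold bodyF
  rw [adecode_acode]

lemma A_child_eq (S : ADSystem X) (x y : X) (s : Bool) (i : ℕ) (q : List ℕ) :
    Afun S x y (acode (s, i :: q)) = childBody S x y (Afun S x y) s i q := by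
  rw [Afun_eq]
  unfold bodyF
  rw [adecode_acode]
  show (if _ : acode (s, q) < acode (s, i :: q) then
        childBody S x y (fun m => if hm' : m < acode (s, i :: q) then Afun S x y m else none) s i q
      else none) = childBody S x y (Afun S x y) s i q
  rw [dif_pos (acode_lt s i q)]
  exact childBody_congr S x y s i q fun m hm =>
    dif_pos (lt_of_le_of_lt hm (acode_lt s i q))

lemma childElim {S : ADSystem X} {x y : X} {s : Bool} {i : ℕ} {q : List ℕ} {w : X}
    (h : Afun S x y (acode (s, i :: q)) = some w) :
    ∃ z, Afun S x y (acode (s, q)) = some z ∧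
      w ∈ S.C z \ BADat S x y (acode (s, q)) s := by
  rw [A_child_eq] at h
  unfold childBody at h
  rcases hz : Afun S x y (acode (s, q)) with _ | z
  · rw [hz] at h; simp at h
  · rw [hz] at h
    simp only at h
    split at h
    · next ht =>
      refine ⟨z, rfl, ?_⟩
      have : w = enumOf ht i := by
        have := h; simp only [Option.some_inj] at this; exact this.symm
      rw [this]
      exact enumOf_mem ht i
    · simp at h

lemma mem_BAD_roots {S : ADSystem X} {x y : X} {m : ℕ} {s : Bool} :
    x ∈ BADat S x y m s ∧ y ∈ BADat S x y m s := by
  constructor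
  · exact Or.inl (Or.inl rfl)
  · exact Or.inl (Or.inr rfl)

lemma mem_BAD_of_opp {S : ADSystem X} {x y : X} {m : ℕ} {s : Bool}
    {k : ℕ} (hk : k < m) (hside : sideNe k s) {w : X} (hw : w ∈ optC S (Afun S x y k)) :
    w ∈ BADat S x y m s := by
  refine Or.inr ?_
  exact Set.mem_iUnion.2 ⟨⟨k, hk⟩, Set.mem_iUnion.2 ⟨hside, hw⟩⟩

lemma cross_ne {S : ADSystem X} {x y : X} (hxy : x ≠ y) :
    ∀ (s : Bool) (p p' : List ℕ) (z z' : X),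
      Afun S x y (acode (s, p)) = some z → Afun S x y (acode (!s, p')) = some z' →
      z ≠ z' := by
  have hroot : ∀ s : Bool, root x y s = x ∨ root x y s = y := by
    intro s; cases s
    · exact Or.inl rfl
    · exact Or.inr rfl
  intro s p p' z z' h1 h2
  cases p with
  | nil =>
    cases p' with
    | nil =>
      rw [A_root] at h1 h2
      rw [Option.some_inj] at h1 h2
      subst h1; subst h2
      cases s
      · simpa [root] using hxy
      · simpa [root] using hxy.symm
    | cons j q' =>
      rw [A_root, Option.some_inj] at h1
      obtain ⟨z2, hz2, hw⟩ := childElim h2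
      intro hzz; subst hzz
      rcases hroot s with hr | hr <;> rw [hr] at h1 <;> subst h1
      · exact hw.2 mem_BAD_roots.1
      · exact hw.2 mem_BAD_roots.2
  | cons i q =>
    obtain ⟨zq, hzq, hwz⟩ := childElim h1
    cases p' with
    | nil =>
      rw [A_root, Option.some_inj] at h2
      intro hzz; subst hzz
      rcases hroot (!s) with hr | hr <;> rw [hr] at h2 <;> subst h2
      · exact hwz.2 mem_BAD_roots.1
      · exact hwz.2 mem_BAD_roots.2
    | cons j q' =>
      obtain ⟨zq', hzq', hwz'⟩ := childElim h2
      have hmm : acode (s, q) ≠ acode (!s, q') := by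
        intro he
        have := acode_inj he
        have hs : s = !s := congrArg Prod.fst this
        simp at hs
      intro hzz; subst hzz
      rcases lt_or_gt_of_ne hmm with hlt | hlt
      · -- z' ∈ BADat (acode (!s,q')) !s since acode (s,q) is an earlier opposite node
        have hside : sideNe (acode (s, q)) (!s) := by
          refine ⟨(s, q), adecode_acode _, ?_⟩
          simp
        have : z ∈ BADat S x y (acode (!s, q')) (!s) := by
          refine mem_BAD_of_opp hlt hside ?_
          rw [hzq]
          exact Set.mem_insert_iff.2 (Or.inr hwz.1)
        exact hwz'.2 this
      · have hside : sideNe (acode (!s, q')) s := by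
          refine ⟨(!s, q'), adecode_acode _, ?_⟩
          simp
        have : z ∈ BADat S x y (acode (s, q)) s := by
          refine mem_BAD_of_opp hlt hside ?_
          rw [hzq']
          exact Set.mem_insert_iff.2 (Or.inr hwz'.1)
        exact hwz.2 this


lemma bad_inter_fin {S : ADSystem X} {x y : X} (hxy : x ≠ y) {s : Bool} {q : List ℕ} {z : X}
    (hq : Afun S x y (acode (s, q)) = some z) :
    (BADat S x y (acode (s, q)) s ∩ S.C z).Finite := by
  unfold BADat BADg
  rw [Set.union_inter_distrib_right, Set.union_inter_distrib_right]
  refine ((Set.finite_singleton x).inter_of_left _).union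
    ((Set.finite_singleton y).inter_of_left _) |>.union ?_
  rw [Set.iUnion_inter]
  refine Set.finite_iUnion fun k => ?_
  rw [Set.iUnion_inter]
  by_cases hside : sideNe k.1 s
  · have hsub : (⋃ (_ : sideNe k.1 s), optC S (Afun S x y k.1) ∩ S.C z)
        ⊆ optC S (Afun S x y k.1) ∩ S.C z := Set.iUnion_subset fun _ => le_rfl
    refine Set.Finite.subset ?_ hsub
    rcases hk : Afun S x y k.1 with _ | w
    · simp [optC]
    · obtain ⟨b, hb, hbs⟩ := hside
      have hk1 : acode b = k.1 := acode_adecode hb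
      have hb1 : b.1 = !s := by
        rcases b with ⟨bs, bq⟩
        rcases bs with _|_ <;> rcases s with _|_ <;> simp_all
      have hAb : Afun S x y (acode (!s, b.2)) = some w := by
        rw [← hb1]
        rw [show ((b.1, b.2) : Bool × List ℕ) = b from rfl, hk1]
        exact hk
      have hzw : z ≠ w := cross_ne hxy s q b.2 z w hq hAb
      have : optC S (some w) ∩ S.C z ⊆ {w} ∪ (S.C w ∩ S.C z) := by
        rintro v ⟨hv1, hv2⟩
        rcases Set.mem_insert_iff.1 hv1 with rfl | hv1
        · exact Or.inl rfl
        · exact Or.inr ⟨hv1, hv2⟩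
      refine Set.Finite.subset ?_ this
      refine (Set.finite_singleton w).union ?_
      rw [Set.inter_comm]
      exact S.almost_disjoint z w hzw
  · simp [hside]

lemma tail_inf {S : ADSystem X} {x y : X} (hxy : x ≠ y) {s : Bool} {q : List ℕ} {z : X}
    (hq : Afun S x y (acode (s, q)) = some z) (hzC : (S.C z).Infinite) :
    (S.C z \ BADat S x y (acode (s, q)) s).Infinite := by
  have h1 : S.C z \ BADat S x y (acode (s, q)) s
      = S.C z \ (BADat S x y (acode (s, q)) s ∩ S.C z) := by
    rw [Set.diff_inter_self_eq_diff]
  rw [h1]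
  exact hzC.diff (bad_inter_fin hxy hq)

lemma child_intro {S : ADSystem X} {x y : X} (hxy : x ≠ y) {s : Bool} {q : List ℕ} {z w : X}
    (hq : Afun S x y (acode (s, q)) = some z) (hzC : (S.C z).Infinite)
    (hw : w ∈ S.C z \ BADat S x y (acode (s, q)) s) :
    ∃ i, Afun S x y (acode (s, i :: q)) = some w := by
  have ht : (S.C z \ BADg S x y (Afun S x y) (acode (s, q)) s).Countable ∧
      (S.C z \ BADg S x y (Afun S x y) (acode (s, q)) s).Infinite :=
    ⟨(S.C_countable z).mono Set.diff_subset, tail_inf hxy hq hzC⟩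
  obtain ⟨i, hi⟩ := enumOf_surj ht hw
  refine ⟨i, ?_⟩
  rw [A_child_eq]
  unfold childBody
  rw [hq]
  simp only
  rw [dif_pos ht, hi]

def Uside (S : ADSystem X) (x y : X) (s : Bool) : Set X :=
  {w | ∃ p, Afun S x y (acode (s, p)) = some w}

lemma Uside_open {S : ADSystem X} {x y : X} (hxy : x ≠ y) (s : Bool) :
    @IsOpen X S.topo (Uside S x y s) := by
  rw [S.isOpen_iff]
  rintro z ⟨p, hp⟩
  rcases S.C_infinite_or_empty z with hzC | hzE
  · refine Set.Finite.subset (bad_inter_fin hxy hp) ?_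
    rintro c ⟨hc1, hc2⟩
    by_cases hb : c ∈ BADat S x y (acode (s, p)) s
    · exact ⟨hb, hc1⟩
    · obtain ⟨i, hi⟩ := child_intro hxy hp hzC ⟨hc1, hb⟩
      exact absurd ⟨i :: p, hi⟩ hc2
  · rw [hzE]
    exact Set.finite_empty.subset (Set.diff_subset)

lemma Uside_mem_x (S : ADSystem X) (x y : X) : x ∈ Uside S x y false :=
  ⟨[], A_root S x y false⟩

lemma Uside_mem_y (S : ADSystem X) (x y : X) : y ∈ Uside S x y true :=
  ⟨[], A_root S x y true⟩

lemma Uside_disj {S : ADSystem X} {x y : X} (hxy : x ≠ y) :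
    Disjoint (Uside S x y false) (Uside S x y true) := by
  rw [Set.disjoint_left]
  rintro w ⟨p, hp⟩ ⟨p', hp'⟩
  have hp'' : Afun S x y (acode (!false, p')) = some w := hp'
  exact cross_ne hxy false p p' w w hp hp'' rfl

end Sep

lemma ADSystem.t2 {X : Type} (S : ADSystem X) : @T2Space X S.topo := by
  letI := S.topo
  refine @T2Space.mk X S.topo ?_
  intro a b hab
  exact ⟨Sep.Uside S a b false, Sep.Uside S a b true,
    Sep.Uside_open hab false, Sep.Uside_open hab true,
    Sep.Uside_mem_x S a b, Sep.Uside_mem_y S a b, Sep.Uside_disj hab⟩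

noncomputable section Build
open Classical Set

variable {σ : Type} (g : Set σ → σ) (D : Set σ)

def Xset (R : Set (Set σ)) : Set σ := D ∪ g '' R

lemma Xset_mono {R R' : Set (Set σ)} (h : R ⊆ R') : Xset g D R ⊆ Xset g D R' :=
  Set.union_subset_union_right _ (Set.image_mono h)

def SysP (p : Set (Set σ) × (σ → Ordinal.{0})) : Prop :=
  (∀ C ∈ p.1, C.Countable ∧ C.Infinite ∧ C ⊆ Xset g D p.1) ∧
  (∀ C ∈ p.1, ∀ C' ∈ p.1, C ≠ C' → (C ∩ C').Finite) ∧
  (∀ C ∈ p.1, ∀ s ∈ C, p.2 s < p.2 (g C))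

def SysRel (p q : Set (Set σ) × (σ → Ordinal.{0})) : Prop :=
  p.1 ⊆ q.1 ∧ ∀ s ∈ Xset g D p.1, p.2 s = q.2 s

lemma sysP_bot : SysP g D (∅, fun _ => 0) := by
  refine ⟨?_, ?_, ?_⟩ <;> intro C hC <;> simp at hC

lemma sys_exists_max :
    ∃ m : {p : Set (Set σ) × (σ → Ordinal.{0}) // SysP g D p},
      ∀ a : {p : Set (Set σ) × (σ → Ordinal.{0}) // SysP g D p},
        SysRel g D m.1 a.1 → SysRel g D a.1 m.1 := by
  have := exists_maximal_of_chains_bounded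
    (r := fun (p q : {p // SysP g D p}) => SysRel g D p.1 q.1) ?_ ?_
  · exact this
  · -- chains bounded
    intro c hc
    rcases Set.eq_empty_or_nonempty c with rfl | hc0
    · exact ⟨⟨(∅, fun _ => 0), sysP_bot g D⟩, by simp⟩
    · set Rsup : Set (Set σ) := {C | ∃ p ∈ c, C ∈ (p : {p // SysP g D p}).1.1} with hRsup
      set ρsup : σ → Ordinal.{0} := fun s =>
        if h : ∃ p : {p // SysP g D p}, p ∈ c ∧ s ∈ Xset g D p.1.1 then
          (Classical.choose h).1.2 s
        else 0 with hρsup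
      have hsub : ∀ p ∈ c, (p : {p // SysP g D p}).1.1 ⊆ Rsup := by
        intro p hp C hC; exact ⟨p, hp, hC⟩
      have key : ∀ p ∈ c, ∀ s ∈ Xset g D (p : {p // SysP g D p}).1.1,
          p.1.2 s = ρsup s := by
        intro p hp s hs
        have hex : ∃ q : {p // SysP g D p}, q ∈ c ∧ s ∈ Xset g D q.1.1 := ⟨p, hp, hs⟩
        rw [hρsup]
        simp only
        rw [dif_pos hex]
        obtain ⟨hqc, hqs⟩ := Classical.choose_spec hex
        set q := Classical.choose hex
        by_cases hpq : p = q
        · rw [hpq]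
        · rcases hc hp hqc hpq with h | h
          · exact h.2 s hs
          · exact (h.2 s hqs).symm
      refine ⟨⟨(Rsup, ρsup), ?_, ?_, ?_⟩, ?_⟩
      · -- ax1
        rintro C ⟨p, hp, hC⟩
        obtain ⟨h1, h2, h3⟩ := (p.2.1) C hC
        exact ⟨h1, h2, h3.trans (Xset_mono g D (hsub p hp))⟩
      · -- ax2
        rintro C ⟨p, hp, hC⟩ C' ⟨q, hq, hC'⟩ hne
        by_cases hpq : p = q
        · subst hpq; exact p.2.2.1 C hC C' hC' hne
        · rcases hc hp hq hpq with h | h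
          · exact q.2.2.1 C (h.1 hC) C' hC' hne
          · exact p.2.2.1 C hC C' (h.1 hC') hne
      · -- ax3
        rintro C ⟨p, hp, hC⟩ s hs
        obtain ⟨h1, h2, h3⟩ := p.2.1 C hC
        have hsX : s ∈ Xset g D p.1.1 := h3 hs
        have hgX : g C ∈ Xset g D p.1.1 := Or.inr ⟨C, hC, rfl⟩
        show ρsup s < ρsup (g C)
        rw [← key p hp s hsX, ← key p hp (g C) hgX]
        exact p.2.2.2 C hC s hs
      · -- upper bound
        intro p hp
        exact ⟨hsub p hp, key p hp⟩
  · -- transitivity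
    intro a b d hab hbd
    refine ⟨hab.1.trans hbd.1, ?_⟩
    intro s hs
    rw [hab.2 s hs, hbd.2 s (Xset_mono g D hab.1 hs)]

end Build

noncomputable section Dense
open Classical Set

variable {σ : Type} {g : Set σ → σ} {D : Set σ}

lemma max_dense
    (hginj : ∀ C C' : Set σ, C.Countable → C'.Countable → g C = g C' → C = C')
    (hgD : ∀ C : Set σ, g C ∉ D)
    (m : {p : Set (Set σ) × (σ → Ordinal.{0}) // SysP g D p})
    (hmax : ∀ a : {p : Set (Set σ) × (σ → Ordinal.{0}) // SysP g D p},
      SysRel g D m.1 a.1 → SysRel g D a.1 m.1)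
    {B : Set σ} (hBsub : B ⊆ Xset g D m.1.1) (hBc : B.Countable) (hBinf : B.Infinite) :
    ∃ C ∈ m.1.1, (B ∩ C).Infinite := by
  by_contra hno
  push_neg at hno
  have hBnotin : B ∉ m.1.1 := by
    intro hBin
    have := hno B hBin
    rw [Set.inter_self] at this
    exact hBinf this
  have hfresh : g B ∉ Xset g D m.1.1 := by
    rintro (hD | ⟨C, hC, hgC⟩)
    · exact hgD B hD
    · have hCc : C.Countable := (m.2.1 C hC).1
      have : C = B := hginj C B hCc hBc hgC
      subst this
      exact hBnotin hC
  set ρ' : σ → Ordinal.{0} := fun s =>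
    if s = g B then (⨆ b : ↥B, m.1.2 ↑b) + 1 else m.1.2 s with hρ'
  have hρ'old : ∀ s ∈ Xset g D m.1.1, ρ' s = m.1.2 s := by
    intro s hs
    rw [hρ']
    simp only
    rw [if_neg (by rintro rfl; exact hfresh hs)]
  have hsup : ∀ s ∈ B, m.1.2 s < (⨆ b : ↥B, m.1.2 ↑b) + 1 := by
    intro s hs
    have h1 : m.1.2 s ≤ ⨆ b : ↥B, m.1.2 ↑b :=
      le_ciSup (Ordinal.bddAbove_range _) (⟨s, hs⟩ : ↥B)
    have h2 : (⨆ b : ↥B, m.1.2 ↑b) < (⨆ b : ↥B, m.1.2 ↑b) + 1 := by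
      rw [Ordinal.add_one_eq_succ]
      exact Order.lt_succ _
    exact lt_of_le_of_lt h1 h2
  have hsysP : SysP g D (insert B m.1.1, ρ') := by
    refine ⟨?_, ?_, ?_⟩
    · rintro C (rfl | hC)
      · exact ⟨hBc, hBinf, hBsub.trans (Xset_mono g D (Set.subset_insert _ _))⟩
      · obtain ⟨h1, h2, h3⟩ := m.2.1 C hC
        exact ⟨h1, h2, h3.trans (Xset_mono g D (Set.subset_insert _ _))⟩
    · rintro C (rfl | hC) C' (rfl | hC') hne
      · exact absurd rfl hne
      · exact hno C' hC'
      · rw [Set.inter_comm]; exact hno C hC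
      · exact m.2.2.1 C hC C' hC' hne
    · rintro C (rfl | hC) s hs
      · have hsX : s ∈ Xset g D m.1.1 := hBsub hs
        show ρ' s < ρ' (g C)
        rw [hρ'old s hsX]
        have hval : ρ' (g C) = (⨆ b : ↥C, m.1.2 ↑b) + 1 := by
          rw [hρ']
          simp
        rw [hval]
        exact hsup s hs
      · obtain ⟨h1, h2, h3⟩ := m.2.1 C hC
        show ρ' s < ρ' (g C)
        rw [hρ'old s (h3 hs), hρ'old (g C) (Or.inr ⟨C, hC, rfl⟩)]
        exact m.2.2.2 C hC s hs
  have hrel : SysRel g D m.1 (insert B m.1.1, ρ') :=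
    ⟨Set.subset_insert _ _, fun s hs => (hρ'old s hs).symm⟩
  have := (hmax ⟨(insert B m.1.1, ρ'), hsysP⟩ hrel).1
  exact hBnotin (this (Set.mem_insert _ _))

end Dense


/-- Assume `λ` is an infinite cardinal with `λ ^ ℵ₀ = λ`. Then there exists a Hausdorff
topological space `X` such that: (1) `|X| = λ`; (2) `X` is locally countable (every point
has a countable open neighborhood); (3) `X` is scattered (every nonempty subset has a
point isolated in its subspace topology); (4) the set of isolated points of `X` has
cardinality `λ`; and (5) `X` is sequentially compact. -/
theorem stmt13 (l : Cardinal.{0}) (hinf : ℵ₀ ≤ l) (hl : l ^ ℵ₀ = l) :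
    ∃ (X : Type) (_ : TopologicalSpace X),
      T2Space X ∧
      #X = l ∧
      (∀ x : X, ∃ U : Set X, IsOpen U ∧ x ∈ U ∧ U.Countable) ∧
      (∀ A : Set X, A.Nonempty → ∃ a ∈ A, ∃ U : Set X, IsOpen U ∧ U ∩ A = {a}) ∧
      #{x : X | IsOpen ({x} : Set X)} = l ∧
      SeqCompactSpace X := by
  classical
  set Dt := Quotient.out l with hDt
  have hmkD : #Dt = l := Cardinal.mk_out l
  have hDinf : Infinite Dt := by
    rw [Cardinal.infinite_iff, hmkD]; exact hinf
  set σ : Type := Dt ⊕ Dt with hσdef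
  have hσ : #σ = l := by
    rw [hσdef, Cardinal.mk_sum, hmkD]
    simp only [Cardinal.lift_id]
    exact Cardinal.add_eq_self hinf
  -- injection from countable subsets of σ into Dt
  have hctble : #{C : Set σ // C.Countable} ≤ l := by
    have hsurj : Function.Surjective
        (Sum.elim (fun f : ℕ → σ => (⟨Set.range f, Set.countable_range f⟩ : {C : Set σ // C.Countable}))
          (fun _ : PUnit => ⟨∅, Set.countable_empty⟩)) := by
      rintro ⟨C, hC⟩
      rcases Set.eq_empty_or_nonempty C with rfl | hne
      · exact ⟨Sum.inr PUnit.unit, rfl⟩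
      · obtain ⟨f, hf⟩ := hC.exists_eq_range hne
        exact ⟨Sum.inl f, by simp [← hf]⟩
    have h1 : #{C : Set σ // C.Countable} ≤ #((ℕ → σ) ⊕ PUnit) :=
      Cardinal.mk_le_of_surjective hsurj
    have h2 : #((ℕ → σ) ⊕ PUnit) = l + 1 := by
      rw [Cardinal.mk_sum]
      simp only [Cardinal.lift_id]
      congr 1
      · rw [← Cardinal.power_def, hσ, Cardinal.mk_nat, hl]
      · simp
    have h3 : l + 1 ≤ l := by
      calc l + 1 ≤ l + l := add_le_add_right (le_trans Cardinal.one_le_aleph0 hinf) l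
      _ = l := Cardinal.add_eq_self hinf
    rw [h2] at h1
    exact h1.trans h3
  have hembn : Nonempty ({C : Set σ // C.Countable} ↪ Dt) := by
    rw [← Cardinal.le_def, hmkD]
    exact hctble
  obtain ⟨g₀⟩ := hembn
  set g : Set σ → σ := fun C =>
    if h : C.Countable then Sum.inr (g₀ ⟨C, h⟩) else Sum.inr (Classical.arbitrary Dt) with hg
  have hginj : ∀ C C' : Set σ, C.Countable → C'.Countable → g C = g C' → C = C' := by
    intro C C' hC hC' he
    rw [hg] at he
    simp only [dif_pos hC, dif_pos hC'] at he
    have := g₀.injective (Sum.inr_injective he)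
    exact congrArg Subtype.val this
  have hginr : ∀ C : Set σ, ∃ t, g C = Sum.inr t := by
    intro C
    rw [hg]
    by_cases h : C.Countable
    · exact ⟨g₀ ⟨C, h⟩, by simp [h]⟩
    · exact ⟨Classical.arbitrary Dt, by simp [h]⟩
  set Ds : Set σ := Set.range Sum.inl with hDs
  have hgD : ∀ C : Set σ, g C ∉ Ds := by
    intro C hmem
    rw [hg] at hmem
    obtain ⟨d, hd⟩ := hmem
    by_cases h : C.Countable <;> simp [dif_pos, dif_neg, h] at hd
  obtain ⟨m, hmax⟩ := sys_exists_max g Ds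
  set R := m.1.1 with hR
  set ρm := m.1.2 with hρm
  set XR : Set σ := Xset g Ds R with hXR
  set X : Type := ↥XR with hX
  -- the witness-set assignment on X
  set Cof : X → Set σ := fun x => ⋃₀ {C | C ∈ R ∧ g C = ↑x} with hCof
  have Cof_eq : ∀ (x : X) (C : Set σ), C ∈ R → g C = ↑x → Cof x = C := by
    intro x C hC hgC
    apply Set.Subset.antisymm
    · rintro s ⟨C', ⟨hC', hgC'⟩, hs⟩
      have : C' = C := hginj C' C (m.2.1 C' hC').1 (m.2.1 C hC).1 (hgC'.trans hgC.symm)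
      rwa [this] at hs
    · exact Set.subset_sUnion_of_mem ⟨hC, hgC⟩
  have Cof_empty : ∀ x : X, ¬ (∃ C ∈ R, g C = ↑x) → Cof x = ∅ := by
    intro x hx
    rw [hCof]
    simp only [Set.sUnion_eq_empty]
    rintro C ⟨hC, hgC⟩
    exact absurd ⟨C, hC, hgC⟩ hx
  set CX : X → Set X := fun x => Subtype.val ⁻¹' Cof x with hCX
  have hvalrange : Set.range (Subtype.val : X → σ) = XR := Subtype.range_coe_subtype
  -- the AD system
  have hS : ∃ S : ADSystem X, S.C = CX ∧ S.rho = fun x : X => ρm x.1 := by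
    refine ⟨⟨CX, fun x : X => ρm x.1, ?_, ?_, ?_, ?_, ?_⟩, rfl, rfl⟩
    · -- countable
      intro x
      by_cases hx : ∃ C ∈ R, g C = ↑x
      · obtain ⟨C, hC, hgC⟩ := hx
        rw [hCX]
        simp only
        rw [Cof_eq x C hC hgC]
        exact ((m.2.1 C hC).1).preimage Subtype.coe_injective
      · rw [hCX]; simp only
        rw [Cof_empty x hx]
        simp
    · -- infinite or empty
      intro x
      by_cases hx : ∃ C ∈ R, g C = ↑x
      · obtain ⟨C, hC, hgC⟩ := hx
        left
        rw [hCX]; simp only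
        rw [Cof_eq x C hC hgC]
        refine ((m.2.1 C hC).2.1).preimage ?_
        rw [hvalrange]
        exact (m.2.1 C hC).2.2
      · right
        rw [hCX]; simp only
        rw [Cof_empty x hx]
        simp
    · -- rho decreasing
      intro x c hc
      rw [hCX] at hc
      simp only [Set.mem_preimage] at hc
      have hxlim : ∃ C ∈ R, g C = ↑x := by
        by_contra hno
        rw [Cof_empty x hno] at hc
        exact hc
      obtain ⟨C, hC, hgC⟩ := hxlim
      rw [Cof_eq x C hC hgC] at hc
      have := m.2.2.2 C hC ↑c hc
      rwa [hgC] at this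
    · -- almost disjoint
      intro x y hxy
      by_cases hx : ∃ C ∈ R, g C = ↑x
      · by_cases hy : ∃ C ∈ R, g C = ↑y
        · obtain ⟨C, hC, hgC⟩ := hx
          obtain ⟨C', hC', hgC'⟩ := hy
          have hCC' : C ≠ C' := by
            rintro rfl
            exact hxy (Subtype.coe_injective (hgC.symm.trans hgC'))
          rw [hCX]; simp only
          rw [Cof_eq x C hC hgC, Cof_eq y C' hC' hgC', ← Set.preimage_inter]
          exact (m.2.2.1 C hC C' hC' hCC').preimage Subtype.coe_injective.injOn
        · rw [hCX]; simp only
          rw [Cof_empty y hy]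
          simp
      · rw [hCX]; simp only
        rw [Cof_empty x hx]
        simp
    · -- density
      intro B hBc hBinf
      have hBs : (Subtype.val '' B) ⊆ XR := by
        rintro s ⟨b, _, rfl⟩
        exact b.2
      have hBsc : (Subtype.val '' B).Countable := hBc.image _
      have hBsi : (Subtype.val '' B).Infinite := hBinf.image Subtype.coe_injective.injOn
      obtain ⟨C, hC, hCinf⟩ := max_dense hginj hgD m hmax hBs hBsc hBsi
      have hgmem : g C ∈ XR := Or.inr ⟨C, hC, rfl⟩
      set p : X := ⟨g C, hgmem⟩ with hp
      refine ⟨p, ?_⟩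
      have hCofp : Cof p = C := Cof_eq p C hC rfl
      have himg : Subtype.val '' (B ∩ CX p) = (Subtype.val '' B) ∩ C := by
        rw [hCX]
        simp only
        rw [hCofp]
        exact Set.image_inter_preimage _ _ _
      have : (Subtype.val '' (B ∩ CX p)).Infinite := by rw [himg]; exact hCinf
      exact Set.Infinite.of_image _ this
  obtain ⟨S, hSC, hSrho⟩ := hS
  letI : TopologicalSpace X := S.topo
  refine ⟨X, S.topo, S.t2, ?_, ?_, ?_, ?_, ?_⟩
  · -- cardinality of X
    apply le_antisymm
    · calc #X ≤ #σ := Cardinal.mk_subtype_le _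
      _ = l := hσ
    · have hinj : Function.Injective (fun d : Dt => (⟨Sum.inl d, Or.inl ⟨d, rfl⟩⟩ : X)) := by
        intro d d' h
        have := congrArg Subtype.val h
        exact Sum.inl_injective this
      calc l = #Dt := hmkD.symm
      _ ≤ #X := Cardinal.mk_le_of_injective hinj
  · -- locally countable
    exact S.locally_countable
  · -- scattered
    exact S.scattered
  · -- isolated points
    have hset : {x : X | IsOpen ({x} : Set X)} = {x : X | ¬ ∃ C ∈ R, g C = ↑x} := by
      ext x
      simp only [Set.mem_setOf_eq]
      rw [show (IsOpen ({x} : Set X)) = (@IsOpen X S.topo {x}) from rfl]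
      rw [S.isolated_iff x, hSC]
      constructor
      · intro hempty hex
        obtain ⟨C, hC, hgC⟩ := hex
        have hCne : C.Nonempty := (m.2.1 C hC).2.1.nonempty
        obtain ⟨s, hs⟩ := hCne
        have hsX : s ∈ XR := (m.2.1 C hC).2.2 hs
        have : (⟨s, hsX⟩ : X) ∈ CX x := by
          rw [hCX]
          simp only [Set.mem_preimage]
          rw [Cof_eq x C hC hgC]
          exact hs
        rw [hempty] at this
        exact this
      · intro hno
        rw [hCX]
        simp only
        rw [Cof_empty x hno]
        simp
    rw [hset]
    have hbij : Function.Bijective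
        (fun d : Dt => (⟨⟨Sum.inl d, Or.inl ⟨d, rfl⟩⟩, by
          intro hex
          obtain ⟨C, hC, hgC⟩ := hex
          obtain ⟨t, ht⟩ := hginr C
          rw [ht] at hgC
          exact Sum.inr_ne_inl hgC⟩ :
          {x : X | ¬ ∃ C ∈ R, g C = ↑x})) := by
      constructor
      · intro d d' h
        have h1 := congrArg (fun z => ((z : {x : X | ¬ ∃ C ∈ R, g C = ↑x}) : X)) h
        have h2 := congrArg Subtype.val h1
        exact Sum.inl_injective h2
      · rintro ⟨x, hx⟩
        rcases x.2 with hmem | hmem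
        · obtain ⟨d, hd⟩ := hmem
          refine ⟨d, ?_⟩
          apply Subtype.ext
          apply Subtype.ext
          exact hd
        · obtain ⟨C, hC, hgC⟩ := hmem
          exact absurd ⟨C, hC, hgC⟩ hx
    rw [← hmkD]
    exact (Cardinal.mk_congr (Equiv.ofBijective _ hbij)).symm
  · -- sequential compactness
    exact @SeqCompactSpace.mk X S.topo S.seq_compact
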